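/- Let G be a locally compact group which is unitarisable. Then c_ub(G) ∈ {1, ∞}; that is, either G does not have Kazhdan's Property (T) (so c_ub(G) = 1), or G has Property (T)_c for every c ≥ 1 (so c_ub(G) = ∞). -/

import Mathlib

open scoped ENNReal
open MeasureTheory

structure HilbRep (G : Type*) [Group G] [TopologicalSpace G] where
  (space : Type*)
  [normedAddCommGroup : NormedAddCommGroup space]
  [innerProductSpace : InnerProductSpace ℂ space]
  [completeSpace : CompleteSpace space]
  toFun : G →* (space →L[ℂ] space)ˣ

attribute [instance] HilbRep.normedAddCommGroup HilbRep.innerProductSpace HilbRep.completeSpace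

namespace HilbRep

variable {G : Type*} [Group G] [TopologicalSpace G]

/-- The bounded invertible operator associated to a group element. -/
def op (π : HilbRep G) (s : G) : π.space →L[ℂ] π.space :=
  (π.toFun s : π.space →L[ℂ] π.space)

/-- The representation is uniformly bounded by `c`. -/
def IsUB (π : HilbRep G) (c : ℝ) : Prop := ∀ s : G, ‖π.op s‖ ≤ c

/-- The representation is continuous for the strong operator topology. -/
def IsSOTContinuous (π : HilbRep G) : Prop :=
  ∀ ξ : π.space, Continuous fun s : G => π.op s ξ

/-- `π ∈ R_c(G)`: strongly continuous and uniformly bounded by `c`. -/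
def IsRc (π : HilbRep G) (c : ℝ) : Prop := π.IsUB c ∧ π.IsSOTContinuous

/-- `π` almost has invariant vectors. -/
def AlmostInvariantVectors (π : HilbRep G) : Prop :=
  ∀ Q : Set G, IsCompact Q → ∀ ε : ℝ, 0 < ε →
    ∃ ξ : π.space, ∀ s ∈ Q, ‖π.op s ξ - ξ‖ < ε * ‖ξ‖

/-- `π` has a nonzero invariant vector. -/
def HasInvariantVector (π : HilbRep G) : Prop :=
  ∃ ξ : π.space, ξ ≠ 0 ∧ ∀ s : G, π.op s ξ = ξ

end HilbRep

universe u v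

/-- Property (T)_c. -/
def HasPropertyT (G : Type u) [Group G] [TopologicalSpace G] (c : ℝ) : Prop :=
  ∀ π : HilbRep.{u, v} G, π.IsRc c → π.AlmostInvariantVectors → π.HasInvariantVector

open Classical in
/-- The constant `c_ub(G) ∈ [1, ∞]`. -/
noncomputable def cUB (G : Type u) [Group G] [TopologicalSpace G] : ℝ≥0∞ :=
  if HasPropertyT.{u, v} G 1 then
    ⨆ (c : ℝ) (_ : 1 ≤ c ∧ HasPropertyT.{u, v} G c), ENNReal.ofReal c
  else 1

/-- `G` is unitarisable: every strongly continuous uniformly bounded representation is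
conjugate, by a bounded invertible operator, to a unitary representation. -/
def Unitarisable (G : Type u) [Group G] [TopologicalSpace G] : Prop :=
  ∀ π : HilbRep.{u, v} G, π.IsSOTContinuous → (∃ c : ℝ, π.IsUB c) →
    ∃ S : π.space ≃L[ℂ] π.space, ∀ (s : G) (ξ : π.space), ‖S (π.op s (S.symm ξ))‖ = ‖ξ‖


namespace HilbRep

variable {G : Type*} [Group G] [TopologicalSpace G]

/-- Conjugate a representation by a continuous linear equivalence. -/
@[reducible] def conj (π : HilbRep G) (S : π.space ≃L[ℂ] π.space) : HilbRep G where
  space := π.space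
  toFun := (MulAut.conj S.toUnit).toMonoidHom.comp π.toFun

lemma conj_op (π : HilbRep G) (S : π.space ≃L[ℂ] π.space) (s : G) (ξ : (π.conj S).space) :
    (π.conj S).op s ξ = S (π.op s (S.symm ξ)) := rfl

end HilbRep

theorem cUB_eq_one_or_top_of_unitarisable {G : Type u} [Group G] [TopologicalSpace G]
    [IsTopologicalGroup G] [LocallyCompactSpace G] (hU : Unitarisable.{u, v} G) :
    (¬ HasPropertyT.{u, v} G 1 ∧ cUB.{u, v} G = 1) ∨
      ((∀ c : ℝ, 1 ≤ c → HasPropertyT.{u, v} G c) ∧ cUB.{u, v} G = ⊤) := by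
  by_cases hT1 : HasPropertyT.{u, v} G 1
  · right
    have hTc : ∀ c : ℝ, 1 ≤ c → HasPropertyT.{u, v} G c := by
      intro c hc π hπ hA
      obtain ⟨S, hS⟩ := hU π hπ.2 ⟨c, hπ.1⟩
      -- the conjugated representation
      set ρ := π.conj S with hρ
      have hop : ∀ (s : G) (ξ : π.space), ρ.op s ξ = S (π.op s (S.symm ξ)) :=
        fun s ξ => rfl
      have hnorm : ∀ (s : G) (ξ : π.space), ‖ρ.op s ξ‖ = ‖ξ‖ := by
        intro s ξ
        rw [hop]
        exact hS s ξ
      -- nontriviality of the space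
      obtain ⟨ξ₀, hξ₀⟩ := hA {1} isCompact_singleton 1 one_pos
      have hξ₀1 := hξ₀ 1 rfl
      have hπ1 : π.op 1 ξ₀ = ξ₀ := by
        simp [HilbRep.op, map_one]
      rw [hπ1, sub_self, norm_zero, one_mul] at hξ₀1
      have hξ₀ne : ξ₀ ≠ 0 := fun h => by simp [h] at hξ₀1
      -- norms of S and S.symm are positive
      set a := ‖S.toContinuousLinearMap‖ with ha
      set b := ‖S.symm.toContinuousLinearMap‖ with hb
      have hapos : 0 < a := by
        have h1 : (0:ℝ) < ‖S ξ₀‖ := by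
          rw [norm_pos_iff]
          simpa using fun h => hξ₀ne (by simpa using congrArg S.symm h)
        have h2 : ‖S ξ₀‖ ≤ a * ‖ξ₀‖ := S.toContinuousLinearMap.le_opNorm ξ₀
        nlinarith [norm_nonneg ξ₀]
      have hbpos : 0 < b := by
        have h1 : (0:ℝ) < ‖S.symm (S ξ₀)‖ := by simpa using hξ₀1
        have h2 : ‖S.symm (S ξ₀)‖ ≤ b * ‖S ξ₀‖ := S.symm.toContinuousLinearMap.le_opNorm _
        nlinarith [norm_nonneg (S ξ₀)]
      -- ρ ∈ R_1
      have hρR : ρ.IsRc 1 := by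
        constructor
        · intro s
          refine ContinuousLinearMap.opNorm_le_bound _ zero_le_one (fun ξ => ?_)
          rw [hnorm s ξ, one_mul]
        · intro ξ
          have := hπ.2 (S.symm ξ)
          exact S.continuous.comp this
      -- ρ almost has invariant vectors
      have hρA : ρ.AlmostInvariantVectors := by
        intro Q hQ ε hε
        have hab : 0 < a * b := mul_pos hapos hbpos
        obtain ⟨η, hη⟩ := hA Q hQ (ε / (a * b)) (div_pos hε hab)
        refine ⟨S η, fun s hs => ?_⟩
        have h1 : ρ.op s (S η) - S η = S (π.op s η - η) := by
          rw [hop, S.symm_apply_apply, map_sub]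
        rw [h1]
        have h2 : ‖S (π.op s η - η)‖ ≤ a * ‖π.op s η - η‖ :=
          S.toContinuousLinearMap.le_opNorm _
        have h3 : ‖π.op s η - η‖ < ε / (a * b) * ‖η‖ := hη s hs
        have h4 : ‖η‖ ≤ b * ‖S η‖ := by
          have := S.symm.toContinuousLinearMap.le_opNorm (S η)
          simpa using this
        have h5 : ‖S (π.op s η - η)‖ < a * (ε / (a * b) * ‖η‖) := by
          refine lt_of_le_of_lt h2 ?_
          exact (mul_lt_mul_iff_right₀ hapos).mpr h3
        have h6 : a * (ε / (a * b) * ‖η‖) ≤ a * (ε / (a * b) * (b * ‖S η‖)) := by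
          have hc : 0 ≤ a * (ε / (a * b)) := by positivity
          nlinarith [div_nonneg hε.le hab.le]
        have h7 : a * (ε / (a * b) * (b * ‖S η‖)) = ε * ‖S η‖ := by
          field_simp
        linarith
      -- apply Property (T)_1
      obtain ⟨ζ, hζne, hζ⟩ := hT1 ρ hρR hρA
      refine ⟨S.symm ζ, fun h => hζne (by simpa using congrArg S h), fun s => ?_⟩
      have := hζ s
      rw [hop] at this
      have := congrArg S.symm this
      simpa using this
    refine ⟨hTc, ?_⟩
    rw [cUB, if_pos hT1, eq_top_iff, ← ENNReal.iSup_natCast]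
    refine iSup_le fun n => ?_
    calc (n : ℝ≥0∞) ≤ ENNReal.ofReal (n + 1) := by
          rw [ENNReal.ofReal_add (by positivity) zero_le_one]
          simp
      _ ≤ _ := le_iSup₂ (f := fun (c : ℝ) (_ : 1 ≤ c ∧ HasPropertyT.{u, v} G c) =>
          ENNReal.ofReal c) ((n : ℝ) + 1) ⟨by linarith [Nat.cast_nonneg (α := ℝ) n],
          hTc _ (by linarith [Nat.cast_nonneg (α := ℝ) n])⟩
  · left
    exact ⟨hT1, by rw [cUB, if_neg hT1]⟩
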